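/- arXiv:1406.5332 — 2 statements merged into one kernel-verified Lean document; each statement's English description precedes it below -/
import Mathlib

section
/- The set P₋₂ = { ord_n(-2) : n ∈ ℕ, n > 1, n odd } equals ℕ \ {0, 2}: the multiplicative order of -2 modulo n is never 2 for any odd n > 1, but every positive integer k ≠ 2 occurs as ord_n(-2) for some odd n > 1. -/
/-- P₋₂ = { ord_n(-2) : n > 1 odd } = ℕ \ {0,2}. -/
theorem orderSet_of_neg_two :
    {k : ℕ | ∃ n : ℕ, 1 < n ∧ Odd n ∧ orderOf (((-2 : ℤ)) : ZMod n) = k}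
      = {k : ℕ | k ≠ 0 ∧ k ≠ 2} := by
  ext k
  simp only [Set.mem_setOf_eq]
  constructor
  · rintro ⟨n, hn, hodd, rfl⟩
    haveI : NeZero n := ⟨by omega⟩
    constructor
    · -- order is nonzero since -2 is a unit
      have hcop : Nat.Coprime 2 n := Nat.coprime_two_left.mpr hodd
      have hu : IsUnit (((-2 : ℤ)) : ZMod n) := by
        have h2 : IsUnit ((2 : ℕ) : ZMod n) := (ZMod.isUnit_iff_coprime 2 n).mpr hcop
        have : (((-2 : ℤ)) : ZMod n) = -((2 : ℕ) : ZMod n) := by push_cast; ring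
        rw [this]
        exact h2.neg
      have : IsOfFinOrder (((-2 : ℤ)) : ZMod n) := by
        rcases hu with ⟨u, hu'⟩
        rw [← hu']
        exact (isOfFinOrder_iff_pow_eq_one).mpr
          ⟨Fintype.card (ZMod n)ˣ, Fintype.card_pos, by
            rw [← Units.val_pow_eq_pow_val, pow_card_eq_one, Units.val_one]⟩
      exact this.orderOf_pos.ne'
    · intro h2
      have hsq : (((-2 : ℤ)) : ZMod n) ^ 2 = 1 := by
        rw [← h2]; exact pow_orderOf_eq_one _
      have h3 : ((3 : ℕ) : ZMod n) = 0 := by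
        have : ((4 : ℤ) : ZMod n) = 1 := by push_cast at hsq ⊢; linear_combination hsq
        push_cast
        push_cast at this
        linear_combination this
      have hdvd : n ∣ 3 := (ZMod.natCast_eq_zero_iff 3 n).mp h3
      have : n = 3 := by
        have := Nat.le_of_dvd (by norm_num) hdvd
        interval_cases n <;> omega
      subst this
      have he : (((-2 : ℤ)) : ZMod 3) = 1 := by decide
      rw [he, orderOf_one] at h2
      exact absurd h2 (by norm_num)
  · rintro ⟨hk0, hk2⟩
    rcases eq_or_ne k 1 with rfl | hk1
    · refine ⟨3, by norm_num, by decide, ?_⟩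
      have he : (((-2 : ℤ)) : ZMod 3) = 1 := by decide
      rw [he, orderOf_one]
    · have hk3 : 3 ≤ k := by omega
      set m : ℤ := (-2) ^ k - 1 with hm
      set n : ℕ := m.natAbs with hn
      have habs2 : |(-2 : ℤ) ^ k| = 2 ^ k := by
        rw [abs_pow]; norm_num
      have hlow : (2 : ℤ) ^ k - 1 ≤ (n : ℤ) := by
        rw [hn, Nat.cast_natAbs]
        push_cast
        calc (2:ℤ)^k - 1 = |(-2:ℤ)^k| - |(1:ℤ)| := by rw [habs2]; norm_num
        _ ≤ |(-2:ℤ)^k - 1| := abs_sub_abs_le_abs_sub _ _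
      have h8 : (8 : ℤ) ≤ 2 ^ k := by
        calc (8:ℤ) = 2^3 := by norm_num
        _ ≤ 2^k := pow_le_pow_right₀ (by norm_num) hk3
      have hn1 : 1 < n := by
        have : (1 : ℤ) < (n : ℤ) := by omega
        exact_mod_cast this
      have hnodd : Odd n := by
        rw [hn, Int.natAbs_odd, hm]
        exact Even.sub_odd (Even.pow_of_ne_zero (by decide) hk0) odd_one
      refine ⟨n, hn1, hnodd, ?_⟩
      haveI : NeZero n := ⟨by omega⟩
      have hdvdm : (n : ℤ) ∣ m := Int.natAbs_dvd.mpr dvd_rfl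
      have hxk : (((-2 : ℤ)) : ZMod n) ^ k = 1 := by
        have h0 : ((m : ℤ) : ZMod n) = 0 := (ZMod.intCast_zmod_eq_zero_iff_dvd m n).mpr hdvdm
        rw [hm] at h0
        push_cast at h0
        linear_combination h0
      have hddvd : orderOf (((-2 : ℤ)) : ZMod n) ∣ k := orderOf_dvd_of_pow_eq_one hxk
      set d := orderOf (((-2 : ℤ)) : ZMod n) with hd
      have hdpos : 0 < d := by
        have : IsOfFinOrder (((-2 : ℤ)) : ZMod n) :=
          isOfFinOrder_iff_pow_eq_one.mpr ⟨k, by omega, hxk⟩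
        exact this.orderOf_pos
      by_contra hne
      have hdk : d < k := lt_of_le_of_ne (Nat.le_of_dvd (by omega) hddvd) hne
      -- then n divides (-2)^d - 1, a nonzero integer of small absolute value
      have hxd : (((-2 : ℤ)) : ZMod n) ^ d = 1 := pow_orderOf_eq_one _
      have hdvd2 : (n : ℤ) ∣ (-2) ^ d - 1 := by
        rw [← ZMod.intCast_zmod_eq_zero_iff_dvd]
        push_cast
        linear_combination hxd
      have hne0 : ((-2 : ℤ)) ^ d - 1 ≠ 0 := by
        intro h
        have : |(-2 : ℤ) ^ d| = 1 := by rw [sub_eq_zero] at h; rw [h]; norm_num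
        rw [abs_pow] at this
        simp only [abs_neg] at this
        have h2d : (2:ℤ)^d = 1 := by simpa using this
        have : (2:ℤ)^1 ≤ 2^d := pow_le_pow_right₀ (by norm_num) hdpos
        omega
      have hle : (n : ℤ) ≤ |(-2 : ℤ) ^ d - 1| :=
        Int.le_of_dvd (abs_pos.mpr hne0) ((dvd_abs _ _).mpr hdvd2)
      have hsmall : |(-2 : ℤ) ^ d - 1| ≤ 2 ^ d + 1 := by
        calc |(-2:ℤ)^d - 1| ≤ |(-2:ℤ)^d| + |(1:ℤ)| := abs_sub _ _
        _ = 2^d + 1 := by rw [abs_pow]; norm_num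
      have hdle : d ≤ k - 1 := by omega
      have h2d : (2:ℤ)^d ≤ 2^(k-1) := pow_le_pow_right₀ (by norm_num) hdle
      have hk1' : (2:ℤ)^(k-1) * 2 = 2^k := by
        rw [← pow_succ]; congr 1; omega
      omega
end

section
/- If two matrices M, M′ ∈ Mat(2,ℤ) are conjugate over ℤ/nℤ (i.e. there is P ∈ GL(2, ℤ/nℤ) with P·M·P⁻¹ ≡ M′ mod n), then they have the same trace, the same determinant, and the same mgcd modulo n, where mgcd([[α,β],[γ,δ]]) = gcd(β, γ, δ-α). -/
/-- The mgcd of a 2×2 integer matrix, reduced with the modulus n: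
gcd(β, γ, δ-α, n). -/
def mgcdMod (M : Matrix (Fin 2) (Fin 2) ℤ) (n : ℕ) : ℕ :=
  Nat.gcd (Int.gcd (M 0 1) (Int.gcd (M 1 0) (M 1 1 - M 0 0))) n

lemma mgcd_dvd_aux (n : ℕ) (M M' : Matrix (Fin 2) (Fin 2) ℤ)
    (P : Matrix (Fin 2) (Fin 2) (ZMod n)) (hP : IsUnit P.det)
    (h : P * M.map (Int.cast : ℤ → ZMod n) = M'.map (Int.cast : ℤ → ZMod n) * P) :
    mgcdMod M n ∣ mgcdMod M' n := by
  set d := mgcdMod M n with hd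
  have hdn : d ∣ n := Nat.gcd_dvd_right _ _
  have hg : (d : ℤ) ∣ (Int.gcd (M 0 1) (Int.gcd (M 1 0) (M 1 1 - M 0 0)) : ℤ) := by
    exact_mod_cast Int.natCast_dvd_natCast.mpr (Nat.gcd_dvd_left _ _)
  have hb : (d : ℤ) ∣ M 0 1 := hg.trans (Int.gcd_dvd_left _ _)
  have hc : (d : ℤ) ∣ M 1 0 := hg.trans ((Int.gcd_dvd_right _ _).trans (Int.gcd_dvd_left _ _))
  have he : (d : ℤ) ∣ M 1 1 - M 0 0 := hg.trans ((Int.gcd_dvd_right _ _).trans (Int.gcd_dvd_right _ _))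
  let f : ZMod n →+* ZMod d := ZMod.castHom hdn (ZMod d)
  have hmap : ∀ N : Matrix (Fin 2) (Fin 2) ℤ,
      (N.map (Int.cast : ℤ → ZMod n)).map f = N.map (Int.cast : ℤ → ZMod d) := by
    intro N
    ext i j
    simp [Matrix.map_apply, f]
  have h' : (P.map f) * M.map (Int.cast : ℤ → ZMod d)
      = M'.map (Int.cast : ℤ → ZMod d) * (P.map f) := by
    have := congrArg (fun X => X.map f) h
    simpa [Matrix.map_mul, hmap] using this
  have hscal : M.map (Int.cast : ℤ → ZMod d)
      = Matrix.scalar (Fin 2) ((M 0 0 : ℤ) : ZMod d) := by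
    have hee : ((M 1 1 - M 0 0 : ℤ) : ZMod d) = 0 :=
      (ZMod.intCast_zmod_eq_zero_iff_dvd _ _).mpr he
    push_cast at hee
    have hb0 : ((M 0 1 : ℤ) : ZMod d) = 0 := (ZMod.intCast_zmod_eq_zero_iff_dvd _ _).mpr hb
    have hc0 : ((M 1 0 : ℤ) : ZMod d) = 0 := (ZMod.intCast_zmod_eq_zero_iff_dvd _ _).mpr hc
    ext i j
    rw [Matrix.scalar_apply]
    fin_cases i <;> fin_cases j <;>
      simp only [Matrix.map_apply, Matrix.diagonal_apply, Fin.mk_one, Fin.zero_eta,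
        if_true, ite_eq_right_iff, reduceIte] <;>
      first
        | exact hb0
        | exact hc0
        | rfl
        | linear_combination hee
  have hQ : IsUnit (P.map f) := by
    rw [Matrix.isUnit_iff_isUnit_det]
    have hdet := RingHom.map_det f P
    rw [RingHom.mapMatrix_apply] at hdet
    rw [← hdet]
    exact hP.map f
  have hM' : M'.map (Int.cast : ℤ → ZMod d) = Matrix.scalar (Fin 2) ((M 0 0 : ℤ) : ZMod d) := by
    have hcomm : (P.map f) * Matrix.scalar (Fin 2) ((M 0 0 : ℤ) : ZMod d)
        = Matrix.scalar (Fin 2) ((M 0 0 : ℤ) : ZMod d) * (P.map f) :=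
      (Matrix.scalar_commute _ (fun r => Commute.all _ r) _).symm
    apply hQ.mul_right_cancel
    rw [← h', hscal, hcomm]
  have hb' : (d : ℤ) ∣ M' 0 1 := by
    rw [← ZMod.intCast_zmod_eq_zero_iff_dvd]
    have := congrFun (congrFun hM' 0) 1
    rw [Matrix.scalar_apply] at this
    simpa [Matrix.map_apply, Matrix.diagonal_apply] using this
  have hc' : (d : ℤ) ∣ M' 1 0 := by
    rw [← ZMod.intCast_zmod_eq_zero_iff_dvd]
    have := congrFun (congrFun hM' 1) 0
    rw [Matrix.scalar_apply] at this
    simpa [Matrix.map_apply, Matrix.diagonal_apply] using this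
  have he' : (d : ℤ) ∣ M' 1 1 - M' 0 0 := by
    rw [← ZMod.intCast_zmod_eq_zero_iff_dvd]
    have h11 := congrFun (congrFun hM' 1) 1
    have h00 := congrFun (congrFun hM' 0) 0
    rw [Matrix.scalar_apply] at h11 h00
    simp only [Matrix.map_apply, Matrix.diagonal_apply, if_pos rfl] at h11 h00
    push_cast
    rw [h11, h00]
    ring
  refine Nat.dvd_gcd ?_ hdn
  rw [← Int.natCast_dvd_natCast]
  exact Int.dvd_coe_gcd hb' (Int.dvd_coe_gcd hc' he')

/-- Matrices conjugate over ℤ/nℤ share trace, determinant and mgcd modulo n. -/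
theorem local_conjugacy_invariants (n : ℕ) (M M' : Matrix (Fin 2) (Fin 2) ℤ)
    (P : Matrix (Fin 2) (Fin 2) (ZMod n)) (hP : IsUnit P.det)
    (h : P * M.map (Int.cast : ℤ → ZMod n) = M'.map (Int.cast : ℤ → ZMod n) * P) :
    (M.map (Int.cast : ℤ → ZMod n)).trace = (M'.map (Int.cast : ℤ → ZMod n)).trace ∧
    (M.map (Int.cast : ℤ → ZMod n)).det = (M'.map (Int.cast : ℤ → ZMod n)).det ∧
    mgcdMod M n = mgcdMod M' n := by
  set A := M.map (Int.cast : ℤ → ZMod n) with hA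
  set A' := M'.map (Int.cast : ℤ → ZMod n) with hA'
  have : Invertible P := P.invertibleOfIsUnitDet hP
  have hAeq : A' = P * A * ⅟P := by
    calc A' = A' * (P * ⅟P) := by rw [mul_invOf_self, mul_one]
    _ = (A' * P) * ⅟P := by rw [mul_assoc]
    _ = P * A * ⅟P := by rw [← h]
  have hrev : ⅟P * A' = A * ⅟P := by
    rw [hAeq]
    calc ⅟P * (P * A * ⅟P) = (⅟P * P) * A * ⅟P := by
          simp only [mul_assoc]
    _ = A * ⅟P := by rw [invOf_mul_self, one_mul]
  have hPinv : IsUnit (⅟P : Matrix (Fin 2) (Fin 2) (ZMod n)).det := by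
    rw [← Matrix.isUnit_iff_isUnit_det]
    exact isUnit_of_invertible (⅟P)
  refine ⟨?_, ?_, ?_⟩
  · calc A.trace = ((⅟P * P) * A).trace := by rw [invOf_mul_self, one_mul]
    _ = (⅟P * (P * A)).trace := by rw [mul_assoc]
    _ = ((P * A) * ⅟P).trace := Matrix.trace_mul_comm _ _
    _ = A'.trace := by rw [hAeq, mul_assoc]
  · rw [hAeq, Matrix.det_mul, Matrix.det_mul]
    have h1 : P.det * (⅟P : Matrix (Fin 2) (Fin 2) (ZMod n)).det = 1 := by
      rw [← Matrix.det_mul, mul_invOf_self, Matrix.det_one]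
    calc A.det = A.det * (P.det * (⅟P).det) := by rw [h1, mul_one]
    _ = P.det * A.det * (⅟P).det := by ring
  · exact Nat.dvd_antisymm (mgcd_dvd_aux n M M' P hP h) (mgcd_dvd_aux n M' M (⅟P) hPinv hrev)
end
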